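/- Fix nonnegative reals $I_{12}, I_{23}, I_{31}$ and positive reals $l_1, l_2, l_3$. Then there is at most one triple of positive reals $(r_1, r_2, r_3)$ satisfying $r_2^2 + r_3^2 + 2 I_{23} r_2 r_3 = l_1^2$, $r_3^2 + r_1^2 + 2 I_{31} r_3 r_1 = l_2^2$, and $r_1^2 + r_2^2 + 2 I_{12} r_1 r_2 = l_3^2$. -/
import Mathlib

private lemma edge_mono (I a b a' b' : ℝ) (hI : 0 ≤ I)
    (ha : 0 < a) (hb : 0 < b) (ha' : 0 < a') (hb' : 0 < b')
    (h1 : a ≤ a') (h2 : b ≤ b') (hs : a < a' ∨ b < b') :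
    a ^ 2 + b ^ 2 + 2 * I * a * b < a' ^ 2 + b' ^ 2 + 2 * I * a' * b' := by
  have hab : a * b ≤ a' * b' :=
    mul_le_mul h1 h2 hb.le ha'.le
  have hIab : 0 ≤ I * (a' * b' - a * b) := mul_nonneg hI (by linarith)
  rcases hs with hs | hs
  · nlinarith [mul_pos (sub_pos.2 hs) (add_pos ha' ha), hIab]
  · nlinarith [mul_pos (sub_pos.2 hs) (add_pos hb' hb), hIab]

theorem euclidean_radius_vector_unique
    (I12 I23 I31 l1 l2 l3 : ℝ)
    (hI12 : 0 ≤ I12) (hI23 : 0 ≤ I23) (hI31 : 0 ≤ I31)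
    (hl1 : 0 < l1) (hl2 : 0 < l2) (hl3 : 0 < l3)
    (r1 r2 r3 s1 s2 s3 : ℝ)
    (hr1 : 0 < r1) (hr2 : 0 < r2) (hr3 : 0 < r3)
    (hs1 : 0 < s1) (hs2 : 0 < s2) (hs3 : 0 < s3)
    (e1 : r2 ^ 2 + r3 ^ 2 + 2 * I23 * r2 * r3 = l1 ^ 2)
    (e2 : r3 ^ 2 + r1 ^ 2 + 2 * I31 * r3 * r1 = l2 ^ 2)
    (e3 : r1 ^ 2 + r2 ^ 2 + 2 * I12 * r1 * r2 = l3 ^ 2)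
    (f1 : s2 ^ 2 + s3 ^ 2 + 2 * I23 * s2 * s3 = l1 ^ 2)
    (f2 : s3 ^ 2 + s1 ^ 2 + 2 * I31 * s3 * s1 = l2 ^ 2)
    (f3 : s1 ^ 2 + s2 ^ 2 + 2 * I12 * s1 * s2 = l3 ^ 2) :
    r1 = s1 ∧ r2 = s2 ∧ r3 = s3 := by
  have h1 : r1 = s1 := by
    rcases lt_trichotomy r1 s1 with h | h | h
    · -- r1 < s1 ⇒ s2 < r2 and s3 < r3 ⇒ contradiction with e1/f1
      exfalso
      have h2 : s2 < r2 := by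
        by_contra hc; push_neg at hc
        have := edge_mono I12 r1 r2 s1 s2 hI12 hr1 hr2 hs1 hs2 h.le hc (Or.inl h)
        linarith
      have h3 : s3 < r3 := by
        by_contra hc; push_neg at hc
        have := edge_mono I31 r3 r1 s3 s1 hI31 hr3 hr1 hs3 hs1 hc h.le (Or.inr h)
        linarith
      have := edge_mono I23 s2 s3 r2 r3 hI23 hs2 hs3 hr2 hr3 h2.le h3.le (Or.inl h2)
      linarith
    · exact h
    · -- symmetric
      exfalso
      have h2 : r2 < s2 := by
        by_contra hc; push_neg at hc
        have := edge_mono I12 s1 s2 r1 r2 hI12 hs1 hs2 hr1 hr2 h.le hc (Or.inl h)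
        linarith
      have h3 : r3 < s3 := by
        by_contra hc; push_neg at hc
        have := edge_mono I31 s3 s1 r3 r1 hI31 hs3 hs1 hr3 hr1 hc h.le (Or.inr h)
        linarith
      have := edge_mono I23 r2 r3 s2 s3 hI23 hr2 hr3 hs2 hs3 h2.le h3.le (Or.inl h2)
      linarith
  have h2 : r2 = s2 := by
    rcases lt_trichotomy r2 s2 with h | h | h
    · have := edge_mono I12 r1 r2 s1 s2 hI12 hr1 hr2 hs1 hs2 h1.le h.le (Or.inr h)
      linarith
    · exact h
    · have := edge_mono I12 s1 s2 r1 r2 hI12 hs1 hs2 hr1 hr2 h1.ge h.le (Or.inr h)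
      linarith
  have h3 : r3 = s3 := by
    rcases lt_trichotomy r3 s3 with h | h | h
    · have := edge_mono I31 r3 r1 s3 s1 hI31 hr3 hr1 hs3 hs1 h.le h1.le (Or.inl h)
      linarith
    · exact h
    · have := edge_mono I31 s3 s1 r3 r1 hI31 hs3 hs1 hr3 hr1 h.le h1.ge (Or.inl h)
      linarith
  exact ⟨h1, h2, h3⟩
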